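/- arXiv:2506.02512 — 2 statements merged into one kernel-verified Lean document; each statement's English description precedes it below -/
import Mathlib

section
/- Let a, b, c be nonnegative integers and define I(a,b,c) = ∫₀¹ t^c (t-1)^b (t+1)^a dt + ∫₀^{-1} t^c (t-1)^b (t+1)^a dt. Then I(a,b,c) = 0 if and only if a = b and a + b + c is even. -/
open intervalIntegral Set

theorem integral_eq_zero_iff (a b c : ℕ) :
    (∫ t in (0:ℝ)..1, t ^ c * (t - 1) ^ b * (t + 1) ^ a) +
      (∫ t in (0:ℝ)..(-1), t ^ c * (t - 1) ^ b * (t + 1) ^ a) = 0 ↔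
    a = b ∧ Even (a + b + c) := by
  set P : ℝ → ℝ := fun t => t ^ c * ((1 - t) ^ b * (1 + t) ^ a
      - (-1 : ℝ) ^ c * ((1 + t) ^ b * (1 - t) ^ a)) with hP
  have hcont : Continuous fun t : ℝ => t ^ c * (t - 1) ^ b * (t + 1) ^ a := by continuity
  have hcont2 : Continuous fun t : ℝ => (-t) ^ c * (-t - 1) ^ b * (-t + 1) ^ a := by continuity
  have hcontP : Continuous P := by rw [hP]; continuity
  have h2 : (∫ t in (0:ℝ)..(-1), t ^ c * (t - 1) ^ b * (t + 1) ^ a)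
      = - ∫ t in (0:ℝ)..1, (-t) ^ c * (-t - 1) ^ b * (-t + 1) ^ a := by
    have := integral_comp_neg (a := 0) (b := 1)
      (fun t : ℝ => t ^ c * (t - 1) ^ b * (t + 1) ^ a)
    simp only [neg_zero] at this
    rw [this, intervalIntegral.integral_symm]
  have hptw : ∀ t : ℝ, t ^ c * (t - 1) ^ b * (t + 1) ^ a
      - (-t) ^ c * (-t - 1) ^ b * (-t + 1) ^ a = (-1 : ℝ) ^ b * P t := by
    intro t
    rw [hP, show (t - 1 : ℝ) = -(1 - t) by ring, show (-t - 1 : ℝ) = -(1 + t) by ring,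
      show (-t + 1 : ℝ) = 1 - t by ring, neg_pow (1 - t), neg_pow (1 + t), neg_pow t]
    ring
  have hsum : (∫ t in (0:ℝ)..1, t ^ c * (t - 1) ^ b * (t + 1) ^ a) +
      (∫ t in (0:ℝ)..(-1), t ^ c * (t - 1) ^ b * (t + 1) ^ a)
      = (-1 : ℝ) ^ b * ∫ t in (0:ℝ)..1, P t := by
    rw [h2, ← sub_eq_add_neg,
      ← intervalIntegral.integral_sub (hcont.intervalIntegrable 0 1) (hcont2.intervalIntegrable 0 1),
      ← intervalIntegral.integral_const_mul]
    exact intervalIntegral.integral_congr fun t _ => hptw t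
  rw [hsum]
  constructor
  · intro h0
    have hI : (∫ t in (0:ℝ)..1, P t) = 0 := by
      rcases mul_eq_zero.mp h0 with h | h
      · exact absurd h (pow_ne_zero _ (by norm_num))
      · exact h
    by_cases hc : Even c
    · by_cases hab : a = b
      · exact ⟨hab, by subst hab; exact (Even.add ⟨_, rfl⟩ hc)⟩
      · exfalso
        rcases Nat.lt_or_ge a b with hlt | hge
        · -- b > a : integral negative
          have hpos : ∀ x ∈ Ioo (0:ℝ) 1, 0 < -P x := by
            intro x hx
            have h1 : (0:ℝ) < 1 - x := by linarith [hx.2]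
            have h2' : (0:ℝ) < 1 + x := by linarith [hx.1]
            have hxp : (0:ℝ) < x := hx.1
            simp only [hP]
            simp only [hc.neg_one_pow, one_mul, neg_sub, ← mul_sub]
            have hb : b = a + (b - a) := by omega
            have e1 : (1 + x) ^ b = (1 + x) ^ a * (1 + x) ^ (b - a) := by
              rw [← pow_add, ← hb]
            have e2 : (1 - x) ^ b = (1 - x) ^ a * (1 - x) ^ (b - a) := by
              rw [← pow_add, ← hb]
            rw [e1, e2]
            have hlt2 : (1 - x) ^ (b - a) < (1 + x) ^ (b - a) :=
              pow_lt_pow_left₀ (by linarith) h1.le (by omega)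
            have : 0 < (1 + x) ^ a * (1 + x) ^ (b - a) * (1 - x) ^ a
                - (1 - x) ^ a * (1 - x) ^ (b - a) * (1 + x) ^ a := by
              have := mul_pos (mul_pos (pow_pos h2' a) (pow_pos h1 a)) (sub_pos.mpr hlt2)
              nlinarith [this]
            nlinarith [pow_pos hxp c, this]
          have := intervalIntegral.intervalIntegral_pos_of_pos_on
            (hcontP.neg.intervalIntegrable 0 1) hpos one_pos
          simp only [Pi.neg_apply] at this
          rw [intervalIntegral.integral_neg, hI] at this
          simp at this
        · have hlt : b < a := by omega
          have hpos : ∀ x ∈ Ioo (0:ℝ) 1, 0 < P x := by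
            intro x hx
            have h1 : (0:ℝ) < 1 - x := by linarith [hx.2]
            have h2' : (0:ℝ) < 1 + x := by linarith [hx.1]
            have hxp : (0:ℝ) < x := hx.1
            simp only [hP]
            simp only [hc.neg_one_pow, one_mul]
            have hb : a = b + (a - b) := by omega
            have e1 : (1 + x) ^ a = (1 + x) ^ b * (1 + x) ^ (a - b) := by
              rw [← pow_add, ← hb]
            have e2 : (1 - x) ^ a = (1 - x) ^ b * (1 - x) ^ (a - b) := by
              rw [← pow_add, ← hb]
            rw [e1, e2]
            have hlt2 : (1 - x) ^ (a - b) < (1 + x) ^ (a - b) :=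
              pow_lt_pow_left₀ (by linarith) h1.le (by omega)
            have : 0 < (1 - x) ^ b * ((1 + x) ^ b * (1 + x) ^ (a - b))
                - (1 + x) ^ b * ((1 - x) ^ b * (1 - x) ^ (a - b)) := by
              nlinarith [mul_pos (mul_pos (pow_pos h1 b) (pow_pos h2' b)) (sub_pos.mpr hlt2)]
            nlinarith [pow_pos hxp c, this]
          have := intervalIntegral.intervalIntegral_pos_of_pos_on
            (hcontP.intervalIntegrable 0 1) hpos one_pos
          rw [hI] at this; exact lt_irrefl _ this
    · exfalso
      have hodd : Odd c := Nat.not_even_iff_odd.mp hc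
      have hpos : ∀ x ∈ Ioo (0:ℝ) 1, 0 < P x := by
        intro x hx
        have h1 : (0:ℝ) < 1 - x := by linarith [hx.2]
        have h2' : (0:ℝ) < 1 + x := by linarith [hx.1]
        simp only [hP, hodd.neg_one_pow]
        have := add_pos (mul_pos (pow_pos h1 b) (pow_pos h2' a))
          (mul_pos (pow_pos h2' b) (pow_pos h1 a))
        nlinarith [pow_pos hx.1 c, this]
      have := intervalIntegral.intervalIntegral_pos_of_pos_on
        (hcontP.intervalIntegrable 0 1) hpos one_pos
      rw [hI] at this; exact lt_irrefl _ this
  · rintro ⟨hab, heven⟩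
    subst hab
    have hc : Even c := by
      rcases Nat.even_add.mp heven with h
      exact h.mp ⟨a, rfl⟩
    have : ∀ t : ℝ, P t = 0 := by
      intro t
      simp only [hP, hc.neg_one_pow, one_mul]
      ring
    rw [intervalIntegral.integral_congr (fun t _ => this t)]
    simp
end

section
/- Let (𝒜, m) be a rank-2 multiarrangement of n ≥ 2 distinct lines through the origin in K² with multiplicities m₁,…,m_n ≥ 1, and suppose m_max := max mᵢ ≥ |m|/2 where |m| = Σmᵢ. Then the module D(𝒜,m) of logarithmic derivations is free with exponents (|m| − m_max, m_max); in particular a homogeneous basis exists with degrees |m| − m_max and m_max. -/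
open MvPolynomial

section WYAux
variable {K : Type*} [Field K]



noncomputable def wyMap (a b c d : K) :
    MvPolynomial (Fin 2) K →ₐ[K] MvPolynomial (Fin 2) K :=
  aeval ![C a * X 0 + C b * X 1, C c * X 0 + C d * X 1]

@[simp] lemma wyMap_X0 (a b c d : K) : wyMap a b c d (X 0) = C a * X 0 + C b * X 1 := by
  simp [wyMap]

@[simp] lemma wyMap_X1 (a b c d : K) : wyMap a b c d (X 1) = C c * X 0 + C d * X 1 := by
  simp [wyMap]

@[simp] lemma wyMap_C (a b c d : K) (x : K) : wyMap a b c d (C x) = C x := by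
  simp [wyMap, algebraMap_eq]

noncomputable def wyEquiv (a b c d : K) (hdet : a * d - b * c = 1) :
    MvPolynomial (Fin 2) K ≃ₐ[K] MvPolynomial (Fin 2) K := by
  have hC : (C a * C d - C b * C c : MvPolynomial (Fin 2) K) = 1 := by
    rw [← C_mul, ← C_mul, ← C_sub, hdet, C_1]
  refine AlgEquiv.ofAlgHom (wyMap a b c d) (wyMap d (-b) (-c) a) ?_ ?_ <;>
  · apply MvPolynomial.algHom_ext
    intro i
    fin_cases i
    · simp only [Fin.mk_zero, Fin.mk_one, AlgHom.coe_comp, Function.comp_apply, AlgHom.id_apply,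
        wyMap_X0, wyMap_X1, wyMap_C, map_add, map_mul, map_neg, AlgHom.commutes, algebraMap_eq, Fin.isValue]
      linear_combination (X (0:Fin 2) : MvPolynomial (Fin 2) K) * hC
    · simp only [Fin.mk_zero, Fin.mk_one, AlgHom.coe_comp, Function.comp_apply, AlgHom.id_apply,
        wyMap_X0, wyMap_X1, wyMap_C, map_add, map_mul, map_neg, AlgHom.commutes, algebraMap_eq, Fin.isValue]
      linear_combination (X (1:Fin 2) : MvPolynomial (Fin 2) K) * hC

@[simp] lemma wyEquiv_apply (a b c d : K) (hdet : a * d - b * c = 1) (z) :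
    wyEquiv a b c d hdet z = wyMap a b c d z := rfl

lemma wy_exists_det (a b : K) (h : ¬(a = 0 ∧ b = 0)) : ∃ c d : K, a * d - b * c = 1 := by
  rcases eq_or_ne a 0 with ha | ha
  · have hb : b ≠ 0 := by tauto
    exact ⟨-b⁻¹, 0, by field_simp [ha]; simp⟩
  · exact ⟨0, a⁻¹, by field_simp; simp⟩

lemma wy_prime_X0 : Prime (X 0 : MvPolynomial (Fin 2) K) := by
  rw [← MulEquiv.prime_iff (MvPolynomial.finSuccEquiv K 1).toMulEquiv]
  have h : (MvPolynomial.finSuccEquiv K 1).toMulEquiv (X 0) = Polynomial.X :=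
    finSuccEquiv_X_zero
  rw [h]
  exact Polynomial.prime_X

lemma wy_prime_linear (a b : K) (h : ¬(a = 0 ∧ b = 0)) :
    Prime (C a * X 0 + C b * X 1 : MvPolynomial (Fin 2) K) := by
  obtain ⟨c, d, hdet⟩ := wy_exists_det a b h
  have := (MulEquiv.prime_iff (wyEquiv a b c d hdet).toMulEquiv
    (p := (X 0 : MvPolynomial (Fin 2) K))).mpr wy_prime_X0
  simpa using this



lemma wy_fin2_degree (σ : Fin 2 →₀ ℕ) : σ.degree = σ 0 + σ 1 := by
  rw [Finsupp.degree, ← Fin.sum_univ_two (f := fun i => σ i)]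
  exact Finset.sum_subset (Finset.subset_univ _) (by
    intro x _ hx
    simpa using Finsupp.notMem_support_iff.mp hx)

lemma wy_deg_one (σ : Fin 2 →₀ ℕ) (h : σ.degree = 1) :
    σ = Finsupp.single 0 1 ∨ σ = Finsupp.single 1 1 := by
  rw [wy_fin2_degree] at h
  rcases Nat.eq_zero_or_pos (σ 0) with h0 | h0
  · right
    ext i
    fin_cases i <;> simp_all [Finsupp.single_apply] <;> omega
  · left
    ext i
    fin_cases i <;> simp_all [Finsupp.single_apply] <;> omega

lemma wy_linear_decomp {f : MvPolynomial (Fin 2) K} (hf : f.IsHomogeneous 1) :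
    f = C (coeff (Finsupp.single 0 1) f) * X 0 + C (coeff (Finsupp.single 1 1) f) * X 1 := by
  apply MvPolynomial.ext
  intro σ
  rcases eq_or_ne σ.degree 1 with hd | hd
  · rcases wy_deg_one σ hd with rfl | rfl <;>
      simp [coeff_X', Finsupp.single_left_inj, Finsupp.single_eq_single_iff]
  · rw [hf.coeff_eq_zero hd]
    have h0 : σ ≠ Finsupp.single 0 1 := by
      rintro rfl; simp [wy_fin2_degree, Finsupp.single_apply] at hd
    have h1 : σ ≠ Finsupp.single 1 1 := by
      rintro rfl; simp [wy_fin2_degree, Finsupp.single_apply] at hd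
    simp [coeff_X', Ne.symm h0, Ne.symm h1]

lemma wy_not_dvd (a b a' b' : K) (h : a * b' - b * a' ≠ 0) :
    ¬ ((C a * X 0 + C b * X 1 : MvPolynomial (Fin 2) K) ∣ (C a' * X 0 + C b' * X 1)) := by
  rintro ⟨w, hw⟩
  apply h
  have := congrArg (MvPolynomial.eval ![-b, a]) hw
  simp [eval_mul, eval_add] at this
  linear_combination this

lemma wy_proportional (a b a' b' : K) (hab : ¬(a = 0 ∧ b = 0)) (h : a * b' - b * a' = 0) :
    ∃ c : K, a' = c * a ∧ b' = c * b := by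
  rcases eq_or_ne a 0 with rfl | ha
  · have hb : b ≠ 0 := by tauto
    have ha' : a' = 0 := by
      have hba : b * a' = 0 := by linear_combination -h
      rcases mul_eq_zero.mp hba with h' | h'
      · exact absurd h' hb
      · exact h'
    exact ⟨b' / b, by simp [ha'], by field_simp⟩
  · refine ⟨a' / a, by field_simp, ?_⟩
    field_simp
    linear_combination h

lemma wy_prod_pow_dvd {M ι : Type*} [CommMonoidWithZero M] [IsCancelMulZero M] [DecidableEq ι]
    (T : Finset ι) (p : ι → M) (k : ι → ℕ) (z : M)
    (hp : ∀ i ∈ T, Prime (p i))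
    (hnd : ∀ i ∈ T, ∀ j ∈ T, i ≠ j → ¬ p i ∣ p j)
    (h : ∀ i ∈ T, p i ^ k i ∣ z) : (∏ i ∈ T, p i ^ k i) ∣ z := by
  induction T using Finset.induction_on with
  | empty => simpa using one_dvd z
  | insert a T ha ih =>
    rw [Finset.prod_insert ha]
    obtain ⟨w, hw⟩ := ih (fun i hi => hp i (Finset.mem_insert_of_mem hi))
      (fun i hi j hj hij => hnd i (Finset.mem_insert_of_mem hi) j (Finset.mem_insert_of_mem hj) hij)
      (fun i hi => h i (Finset.mem_insert_of_mem hi))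
    have hpa := hp a (Finset.mem_insert_self a T)
    have hnotdvd : ¬ p a ∣ ∏ i ∈ T, p i ^ k i := by
      intro hd
      obtain ⟨i, hi, hdi⟩ := hpa.exists_mem_finset_dvd hd
      exact hnd a (Finset.mem_insert_self a T) i (Finset.mem_insert_of_mem hi)
        (fun he => ha (he ▸ hi)) (hpa.dvd_of_dvd_pow hdi)
    have : p a ^ k a ∣ (∏ i ∈ T, p i ^ k i) * w := hw ▸ h a (Finset.mem_insert_self a T)
    have hka := hpa.pow_dvd_of_dvd_mul_left _ hnotdvd this
    have hfin : (∏ i ∈ T, p i ^ k i) * p a ^ k a ∣ z := by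
      rw [hw]; exact mul_dvd_mul_left _ hka
    rwa [mul_comm] at hfin



lemma wy_crt {ι : Type*} [DecidableEq ι] (T : Finset ι) (nn r : ι → Polynomial K)
    (hco : ∀ i ∈ T, ∀ j ∈ T, i ≠ j → IsCoprime (nn i) (nn j)) :
    ∃ H : Polynomial K, ∀ i ∈ T, nn i ∣ (H - r i) := by
  induction T using Finset.induction_on with
  | empty => exact ⟨0, by simp⟩
  | insert a T ha ih =>
    obtain ⟨H, hH⟩ := ih (fun i hi j hj hij =>
      hco i (Finset.mem_insert_of_mem hi) j (Finset.mem_insert_of_mem hj) hij)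
    have hcop : IsCoprime (nn a) (∏ i ∈ T, nn i) := by
      apply IsCoprime.prod_right
      intro i hi
      exact hco a (Finset.mem_insert_self a T) i (Finset.mem_insert_of_mem hi)
        (fun he => ha (he ▸ hi))
    obtain ⟨x, y, hxy⟩ := hcop
    refine ⟨H + (∏ i ∈ T, nn i) * (y * (r a - H)), ?_⟩
    intro i hi
    rcases Finset.mem_insert.mp hi with rfl | hiT
    · have : H + (∏ i ∈ T, nn i) * (y * (r i - H)) - r i = (H - r i) * (x * nn i) := by
        linear_combination (r i - H) * hxy
      rw [this]
      exact ⟨(H - r i) * x, by ring⟩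
    · have h1 : nn i ∣ H - r i := hH i hiT
      have h2 : nn i ∣ (∏ j ∈ T, nn j) := Finset.dvd_prod_of_mem nn hiT
      have : H + (∏ i ∈ T, nn i) * (y * (r a - H)) - r i
          = (H - r i) + (∏ i ∈ T, nn i) * (y * (r a - H)) := by ring
      rw [this]
      exact dvd_add h1 (h2.mul_right _)

lemma wy_der_C (θ : Derivation K (MvPolynomial (Fin 2) K) (MvPolynomial (Fin 2) K)) (t : K) :
    θ (C t) = 0 := by
  rw [← MvPolynomial.algebraMap_eq]
  exact Derivation.map_algebraMap θ t

lemma wy_der_lin (θ : Derivation K (MvPolynomial (Fin 2) K) (MvPolynomial (Fin 2) K))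
    (r s : K) (x y : MvPolynomial (Fin 2) K) :
    θ (C r * x + C s * y) = C r * θ x + C s * θ y := by
  rw [map_add, Derivation.leibniz, Derivation.leibniz, wy_der_C, wy_der_C]
  simp [smul_eq_mul]



noncomputable def wyHom (u v : MvPolynomial (Fin 2) K) (e : ℕ) (H : Polynomial K) :
    MvPolynomial (Fin 2) K :=
  ∑ k ∈ Finset.range (e + 1), C (H.coeff k) * (u ^ (e - k) * v ^ k)

lemma wyHom_add (u v : MvPolynomial (Fin 2) K) (e : ℕ) (A B : Polynomial K) :
    wyHom u v e (A + B) = wyHom u v e A + wyHom u v e B := by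
  simp [wyHom, Polynomial.coeff_add, map_add, add_mul, Finset.sum_add_distrib]

lemma wyHom_C_mul (u v : MvPolynomial (Fin 2) K) (e : ℕ) (c : K) (A : Polynomial K) :
    wyHom u v e (Polynomial.C c * A) = C c * wyHom u v e A := by
  simp [wyHom, Polynomial.coeff_C_mul, map_mul, Finset.mul_sum, mul_assoc]

lemma wyHom_C (u v : MvPolynomial (Fin 2) K) (e : ℕ) (c : K) :
    wyHom u v e (Polynomial.C c) = C c * u ^ e := by
  rw [wyHom, Finset.sum_eq_single 0]
  · simp
  · intro k _ hk
    simp [Polynomial.coeff_C, hk]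
  · simp

lemma wy_homog_congr {z : MvPolynomial (Fin 2) K} {n n' : ℕ} (h : z.IsHomogeneous n)
    (he : n = n') : z.IsHomogeneous n' := he ▸ h

lemma wyHom_isHomogeneous {u v : MvPolynomial (Fin 2) K} (hu : u.IsHomogeneous 1)
    (hv : v.IsHomogeneous 1) (e : ℕ) (H : Polynomial K) :
    (wyHom u v e H).IsHomogeneous e := by
  apply IsHomogeneous.sum
  intro k hk
  have hk' : k ≤ e := by
    simpa [Nat.lt_succ_iff] using Finset.mem_range.mp hk
  have h1 : (u ^ (e - k) * v ^ k).IsHomogeneous (1 * (e - k) + 1 * k) :=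
    (hu.pow _).mul (hv.pow _)
  exact wy_homog_congr (h1.C_mul (H.coeff k)) (by omega)

lemma wyHom_linear_mul (u v : MvPolynomial (Fin 2) K) (e : ℕ) (p q : K) (F : Polynomial K)
    (hF : F.natDegree ≤ e) :
    wyHom u v (e + 1) ((Polynomial.C p + Polynomial.C q * Polynomial.X) * F)
      = (C p * u + C q * v) * wyHom u v e F := by
  rw [add_mul, wyHom_add, wyHom_C_mul]
  have h2 : wyHom u v (e + 1) (Polynomial.C q * Polynomial.X * F)
      = C q * v * wyHom u v e F := by
    rw [mul_assoc, wyHom_C_mul]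
    have : wyHom u v (e + 1) (Polynomial.X * F) = v * wyHom u v e F := by
      rw [wyHom, Finset.sum_range_succ']
      have h0 : (Polynomial.X * F).coeff 0 = 0 := by
        rw [Polynomial.mul_coeff_zero, Polynomial.coeff_X_zero, zero_mul]
      rw [h0]
      simp only [map_zero, zero_mul, add_zero]
      rw [wyHom, Finset.mul_sum]
      apply Finset.sum_congr rfl
      intro k hk
      rw [Polynomial.coeff_X_mul]
      have : e + 1 - (k + 1) = e - k := by omega
      rw [this, pow_succ]
      ring
    rw [this]
    ring
  have h1 : wyHom u v (e + 1) F = u * wyHom u v e F := by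
    rw [wyHom, Finset.sum_range_succ]
    have hFe : F.coeff (e + 1) = 0 :=
      Polynomial.coeff_eq_zero_of_natDegree_lt (by omega)
    rw [hFe]
    simp only [map_zero, zero_mul, add_zero]
    rw [wyHom, Finset.mul_sum]
    apply Finset.sum_congr rfl
    intro k hk
    have hk' : k ≤ e := by simpa [Nat.lt_succ_iff] using Finset.mem_range.mp hk
    have : e + 1 - k = (e - k) + 1 := by omega
    rw [this, pow_succ]
    ring
  rw [h1, h2]
  ring

lemma wyHom_pow_linear (u v : MvPolynomial (Fin 2) K) (p q : K) (mm e : ℕ) (F : Polynomial K)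
    (hF : F.natDegree ≤ e) (hq : q ≠ 0) :
    wyHom u v (mm + e) ((Polynomial.C p + Polynomial.C q * Polynomial.X) ^ mm * F)
      = (C p * u + C q * v) ^ mm * wyHom u v e F := by
  induction mm with
  | zero => simp
  | succ mm ih =>
    have hdeg : ((Polynomial.C p + Polynomial.C q * Polynomial.X) ^ mm * F).natDegree ≤ mm + e := by
      refine le_trans (Polynomial.natDegree_mul_le) ?_
      have hlin : (Polynomial.C p + Polynomial.C q * Polynomial.X).natDegree ≤ 1 := by
        refine le_trans (Polynomial.natDegree_add_le _ _) (max_le ?_ ?_)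
        · simp
        · exact le_trans Polynomial.natDegree_mul_le (by simp)
      have hple := Polynomial.natDegree_pow_le
        (p := Polynomial.C p + Polynomial.C q * Polynomial.X) (n := mm)
      have hmul : mm * (Polynomial.C p + Polynomial.C q * Polynomial.X).natDegree ≤ mm * 1 :=
        Nat.mul_le_mul_left _ hlin
      omega
    have h1 : mm + 1 + e = (mm + e) + 1 := by omega
    have h2 : (Polynomial.C p + Polynomial.C q * Polynomial.X) ^ (mm + 1) * F
        = (Polynomial.C p + Polynomial.C q * Polynomial.X)
          * ((Polynomial.C p + Polynomial.C q * Polynomial.X) ^ mm * F) := by ring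
    rw [h1, h2, wyHom_linear_mul _ _ _ _ _ _ hdeg, ih]
    ring

lemma wy_coprime_linear (e1 e2 : K) (h : e1 ≠ e2) :
    IsCoprime (Polynomial.X + Polynomial.C e1) (Polynomial.X + Polynomial.C e2) := by
  refine ⟨-Polynomial.C ((e2 - e1)⁻¹), Polynomial.C ((e2 - e1)⁻¹), ?_⟩
  have h21 : e2 - e1 ≠ 0 := sub_ne_zero.mpr (Ne.symm h)
  have : ((e2 - e1)⁻¹ * (e2 - e1)) = 1 := inv_mul_cancel₀ h21
  calc -Polynomial.C ((e2 - e1)⁻¹) * (Polynomial.X + Polynomial.C e1)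
        + Polynomial.C ((e2 - e1)⁻¹) * (Polynomial.X + Polynomial.C e2)
      = Polynomial.C ((e2 - e1)⁻¹ * (e2 - e1)) := by
        rw [Polynomial.C_mul, Polynomial.C_sub]; ring
    _ = 1 := by rw [this, Polynomial.C_1]

end WYAux

set_option maxHeartbeats 1600000 in
open MvPolynomial in
/-- Wakefield–Yuzvinsky: an unbalanced rank-two multiarrangement is free with
exponents `(|m| - m_max, m_max)`: there is a pair of derivations, homogeneous
of those degrees, tangent to the multiarrangement, which form an `S`-basis of
the module `D(𝒜,m)` of logarithmic derivations. -/
theorem unbalanced_rank_two_free {K : Type*} [Field K] [CharZero K]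
    (n : ℕ) (hn : 2 ≤ n)
    (α : Fin n → MvPolynomial (Fin 2) K)
    (hlin : ∀ i, (α i).IsHomogeneous 1) (hα : ∀ i, α i ≠ 0)
    (hdist : ∀ i j, i ≠ j → ∀ c : K, α i ≠ c • α j)
    (m : Fin n → ℕ) (hm : ∀ i, 1 ≤ m i)
    (mmax : ℕ) (hmax : mmax = Finset.univ.sup m)
    (hunbal : ∑ i, m i ≤ 2 * mmax) :
    ∃ θ₁ θ₂ : Derivation K (MvPolynomial (Fin 2) K) (MvPolynomial (Fin 2) K),
      (∀ i, (α i) ^ (m i) ∣ θ₁ (α i)) ∧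
      (∀ i, (α i) ^ (m i) ∣ θ₂ (α i)) ∧
      (∀ j : Fin 2, (θ₁ (X j)).IsHomogeneous ((∑ i, m i) - mmax)) ∧
      (∀ j : Fin 2, (θ₂ (X j)).IsHomogeneous mmax) ∧
      (∀ θ : Derivation K (MvPolynomial (Fin 2) K) (MvPolynomial (Fin 2) K),
        (∀ i, (α i) ^ (m i) ∣ θ (α i)) →
        ∃! fg : MvPolynomial (Fin 2) K × MvPolynomial (Fin 2) K,
          θ = fg.1 • θ₁ + fg.2 • θ₂) := by
  classical
  have hne : (Finset.univ : Finset (Fin n)).Nonempty := by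
    have : Nonempty (Fin n) := ⟨⟨0, by omega⟩⟩
    exact Finset.univ_nonempty
  obtain ⟨i0, -, hi0⟩ := Finset.exists_mem_eq_sup Finset.univ hne m
  have hm0 : m i0 = mmax := by rw [hmax, hi0]
  have hmile : ∀ i, m i ≤ mmax := fun i => hmax ▸ Finset.le_sup (Finset.mem_univ i)
  -- coefficients of the linear forms
  set A : Fin n → K := fun i => coeff (Finsupp.single 0 1) (α i) with hA
  set B : Fin n → K := fun i => coeff (Finsupp.single 1 1) (α i) with hB
  have hdecompX : ∀ i, α i = C (A i) * X 0 + C (B i) * X 1 := fun i => wy_linear_decomp (hlin i)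
  have hABne : ∀ i, ¬(A i = 0 ∧ B i = 0) := by
    rintro i ⟨h0, h1⟩
    exact hα i (by rw [hdecompX i, h0, h1]; simp)
  set a : K := A i0 with ha
  set b : K := B i0 with hb
  obtain ⟨c, d, hdet⟩ := wy_exists_det a b (hABne i0)
  have hC : (C a * C d - C b * C c : MvPolynomial (Fin 2) K) = 1 := by
    rw [← C_mul, ← C_mul, ← C_sub, hdet, C_1]
  set u : MvPolynomial (Fin 2) K := α i0 with hudef
  set v : MvPolynomial (Fin 2) K := C c * X 0 + C d * X 1 with hvdef
  have hu : u = C a * X 0 + C b * X 1 := hdecompX i0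
  have hu_hom : u.IsHomogeneous 1 := hlin i0
  have hv_hom : v.IsHomogeneous 1 := by
    rw [hvdef]
    exact ((isHomogeneous_X K (0 : Fin 2)).C_mul c).add ((isHomogeneous_X K (1 : Fin 2)).C_mul d)
  set P : Fin n → K := fun i => d * A i - c * B i with hP
  set Q : Fin n → K := fun i => a * B i - b * A i with hQ
  have hdecomp : ∀ i, α i = C (P i) * u + C (Q i) * v := by
    intro i
    rw [hdecompX i, hu, hvdef, hP, hQ]
    simp only [map_sub, map_mul]
    linear_combination (-(C (A i) * X 0 + C (B i) * X 1) : MvPolynomial (Fin 2) K) * hC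
  have hQ0 : Q i0 = 0 := by rw [hQ]; show a * B i0 - b * A i0 = 0; rw [ha, hb, mul_comm, sub_self]
  have hP0 : C (P i0) * u = u := by
    have h1 := hdecomp i0
    rw [hQ0] at h1
    simpa using h1.symm
  have hP01 : P i0 = 1 := by
    have hne := hα i0
    have : (C (P i0) - 1) * u = 0 := by rw [sub_mul, hP0, one_mul, sub_self]
    rcases mul_eq_zero.mp this with h' | h'
    · have : C (P i0) = (C 1 : MvPolynomial (Fin 2) K) := by
        rw [C_1]; linear_combination h'
      exact C_injective _ _ this
    · exact absurd h' hne
  have hQne : ∀ i, i ≠ i0 → Q i ≠ 0 := by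
    intro i hi hQi
    have h0 : a * B i - b * A i = 0 := hQi
    obtain ⟨e, he1, he2⟩ := wy_proportional a b (A i) (B i) (hABne i0) h0
    apply hdist i i0 hi e
    rw [hdecompX i, hdecompX i0, he1, he2, smul_eq_C_mul, ← ha, ← hb]
    simp only [map_mul]
    ring
  -- primes and non-divisibility
  have hprime : ∀ i, Prime (α i) := by
    intro i
    rw [hdecompX i]
    exact wy_prime_linear (A i) (B i) (hABne i)
  have hnd : ∀ i j, i ≠ j → ¬ α i ∣ α j := by
    intro i j hij hdvd
    rw [hdecompX i, hdecompX j] at hdvd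
    refine wy_not_dvd (A i) (B i) (A j) (B j) ?_ hdvd
    intro h0
    obtain ⟨e, he1, he2⟩ := wy_proportional (A i) (B i) (A j) (B j) (hABne i) h0
    apply hdist j i (Ne.symm hij) e
    rw [hdecompX i, hdecompX j, he1, he2, smul_eq_C_mul]
    simp only [map_mul]
    ring
  set T : Finset (Fin n) := Finset.univ.erase i0 with hT
  set W : MvPolynomial (Fin 2) K := ∏ i ∈ T, α i ^ m i with hW
  have hWne : W ≠ 0 := by
    rw [hW]
    exact Finset.prod_ne_zero_iff.mpr (fun i _ => pow_ne_zero _ (hα i))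
  have hs : (∑ i ∈ T, m i) + mmax = ∑ i, m i := by
    rw [hT, ← hm0]
    exact Finset.sum_erase_add _ _ (Finset.mem_univ i0)
  have hsle : (∑ i ∈ T, m i) ≤ mmax := by omega
  have hdvdW : ∀ i ∈ T, α i ^ m i ∣ W := fun i hi =>
    Finset.dvd_prod_of_mem (fun j => α j ^ m j) hi
  -- CRT in one variable
  set μ : Fin n → Polynomial K := fun i => Polynomial.X + Polynomial.C (P i / Q i) with hμ
  have hprop : ∀ i ∈ T, ∀ j ∈ T, i ≠ j → P i / Q i ≠ P j / Q j := by
    intro i hi j hj hij heq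
    have hQi := hQne i (Finset.ne_of_mem_erase hi)
    have hQj := hQne j (Finset.ne_of_mem_erase hj)
    rw [div_eq_div_iff hQi hQj] at heq
    have h0 : P j * Q i - Q j * P i = 0 := by linear_combination -heq
    obtain ⟨e, he1, he2⟩ := wy_proportional (P j) (Q j) (P i) (Q i) (fun hh => hQj hh.2) h0
    apply hdist i j hij e
    rw [hdecomp i, hdecomp j, he1, he2, smul_eq_C_mul]
    simp only [map_mul]
    ring
  have hcop : ∀ i ∈ T, ∀ j ∈ T, i ≠ j → IsCoprime (μ i ^ m i) (μ j ^ m j) := by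
    intro i hi j hj hij
    exact (wy_coprime_linear _ _ (hprop i hi j hj hij)).pow
  obtain ⟨H₀, hH₀⟩ := wy_crt T (fun i => μ i ^ m i)
    (fun i => Polynomial.C (-(P i / Q i))) hcop
  set N : Polynomial K := ∏ i ∈ T, μ i ^ m i with hN
  have hNmonic : N.Monic := by
    rw [hN]
    exact Polynomial.monic_prod_of_monic _ _ (fun i _ => (Polynomial.monic_X_add_C _).pow _)
  set H : Polynomial K := H₀ %ₘ N with hH
  have hHdvd : ∀ i ∈ T, μ i ^ m i ∣ H - Polynomial.C (-(P i / Q i)) := by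
    intro i hi
    have heq : H - Polynomial.C (-(P i / Q i))
        = (H₀ - Polynomial.C (-(P i / Q i))) - N * (H₀ /ₘ N) := by
      rw [hH, Polynomial.modByMonic_eq_sub_mul_div _ _]
      ring
    rw [heq]
    exact dvd_sub (hH₀ i hi) ((Finset.dvd_prod_of_mem _ hi).mul_right _)
  have hNdeg : N.natDegree = ∑ i ∈ T, m i := by
    rw [hN, Polynomial.natDegree_prod _ _ (fun i _ => pow_ne_zero _ (Polynomial.monic_X_add_C _).ne_zero)]
    refine Finset.sum_congr rfl (fun i _ => ?_)
    rw [Polynomial.natDegree_pow, Polynomial.natDegree_X_add_C, mul_one]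
  have hHdeg : H.natDegree ≤ mmax := by
    rcases eq_or_ne H 0 with h0 | h0
    · rw [h0]; simpa using Nat.zero_le _
    · have hlt : H.degree < N.degree := by
        rw [hH]
        exact Polynomial.degree_modByMonic_lt _ hNmonic
      have := Polynomial.natDegree_lt_natDegree h0 hlt
      omega
  set h : MvPolynomial (Fin 2) K := wyHom u v mmax H with hh
  have hh_hom : h.IsHomogeneous mmax := wyHom_isHomogeneous hu_hom hv_hom mmax H
  -- key divisibility for the second derivation
  have hz : ∀ i ∈ T, α i ^ m i ∣ C (Q i) * h + C (P i) * u ^ mmax := by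
    intro i hi
    have hQi := hQne i (Finset.ne_of_mem_erase hi)
    obtain ⟨R₀, hR₀⟩ := hHdvd i hi
    set G : Polynomial K := Polynomial.C (Q i) * H + Polynomial.C (P i) with hG
    set R : Polynomial K := Polynomial.C (Q i * (Q i ^ m i)⁻¹) * R₀ with hRdef
    have hγ : (Polynomial.C (P i) + Polynomial.C (Q i) * Polynomial.X)
        = Polynomial.C (Q i) * μ i := by
      rw [hμ]
      have : Q i * (P i / Q i) = P i := by field_simp
      rw [mul_add, ← Polynomial.C_mul, this]
      ring
    have hGR : G = (Polynomial.C (P i) + Polynomial.C (Q i) * Polynomial.X) ^ m i * R := by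
      rw [hγ, mul_pow, ← Polynomial.C_pow, hRdef]
      have hcollapse : (Polynomial.C (Q i ^ m i)) * μ i ^ m i
            * (Polynomial.C (Q i * (Q i ^ m i)⁻¹) * R₀)
          = Polynomial.C (Q i) * (μ i ^ m i * R₀) := by
        rw [← mul_assoc, mul_comm (Polynomial.C (Q i ^ m i) * μ i ^ m i) _, ← mul_assoc,
          ← Polynomial.C_mul]
        have : Q i * (Q i ^ m i)⁻¹ * Q i ^ m i = Q i := by
          field_simp
        rw [this]
        ring
      rw [hcollapse, ← hR₀, hG, mul_sub, Polynomial.C_neg, mul_neg, ← Polynomial.C_mul]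
      have hqp : Q i * (P i / Q i) = P i := by field_simp
      rw [hqp]
      ring
    have hRdeg : R.natDegree ≤ mmax - m i := by
      refine le_trans (Polynomial.natDegree_C_mul_le _ _) ?_
      rcases eq_or_ne R₀ 0 with h0 | h0
      · rw [h0]; simpa using Nat.zero_le _
      · have hμne : μ i ^ m i ≠ 0 := pow_ne_zero _ (Polynomial.monic_X_add_C _).ne_zero
        have hdeq : (H - Polynomial.C (-(P i / Q i))).natDegree = m i + R₀.natDegree := by
          rw [hR₀, Polynomial.natDegree_mul hμne h0, Polynomial.natDegree_pow,
            Polynomial.natDegree_X_add_C, mul_one]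
        have hdle : (H - Polynomial.C (-(P i / Q i))).natDegree ≤ mmax := by
          refine le_trans (Polynomial.natDegree_sub_le _ _) ?_
          simpa using hHdeg
        omega
    have hkey := wyHom_pow_linear u v (P i) (Q i) (m i) (mmax - m i) R hRdeg hQi
    have hmm : m i + (mmax - m i) = mmax := by have := hmile i; omega
    rw [hmm, ← hGR] at hkey
    have hGh : C (Q i) * h + C (P i) * u ^ mmax = wyHom u v mmax G := by
      rw [hG, wyHom_add, wyHom_C_mul, wyHom_C, hh]
    rw [hGh, hkey, ← hdecomp i]
    exact Dvd.intro _ rfl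
  -- the two derivations
  set θ₁ : Derivation K (MvPolynomial (Fin 2) K) (MvPolynomial (Fin 2) K) :=
    mkDerivation K ![C (-b) * W, C a * W] with hθ₁
  set θ₂ : Derivation K (MvPolynomial (Fin 2) K) (MvPolynomial (Fin 2) K) :=
    mkDerivation K ![C d * u ^ mmax + C (-b) * h, C (-c) * u ^ mmax + C a * h] with hθ₂
  have hθ₁X0 : θ₁ (X 0) = C (-b) * W := by rw [hθ₁, mkDerivation_X]; rfl
  have hθ₁X1 : θ₁ (X 1) = C a * W := by rw [hθ₁, mkDerivation_X]; rfl
  have hθ₂X0 : θ₂ (X 0) = C d * u ^ mmax + C (-b) * h := by rw [hθ₂, mkDerivation_X]; rfl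
  have hθ₂X1 : θ₂ (X 1) = C (-c) * u ^ mmax + C a * h := by rw [hθ₂, mkDerivation_X]; rfl
  -- values on u and v
  have happly : ∀ θ : Derivation K (MvPolynomial (Fin 2) K) (MvPolynomial (Fin 2) K), ∀ i,
      θ (α i) = C (P i) * θ u + C (Q i) * θ v := by
    intro θ i
    conv_lhs => rw [hdecomp i]
    exact wy_der_lin θ _ _ _ _
  have hθu : ∀ θ : Derivation K (MvPolynomial (Fin 2) K) (MvPolynomial (Fin 2) K),
      θ u = C a * θ (X 0) + C b * θ (X 1) := by
    intro θ
    conv_lhs => rw [hu]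
    exact wy_der_lin θ _ _ _ _
  have hθv : ∀ θ : Derivation K (MvPolynomial (Fin 2) K) (MvPolynomial (Fin 2) K),
      θ v = C c * θ (X 0) + C d * θ (X 1) := by
    intro θ
    conv_lhs => rw [hvdef]
    exact wy_der_lin θ _ _ _ _
  have hθ₁u : θ₁ u = 0 := by
    rw [hθu θ₁, hθ₁X0, hθ₁X1]
    simp only [map_neg]
    ring
  have hθ₁v : θ₁ v = W := by
    rw [hθv θ₁, hθ₁X0, hθ₁X1]
    simp only [map_neg]
    linear_combination W * hC
  have hθ₂u : θ₂ u = u ^ mmax := by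
    rw [hθu θ₂, hθ₂X0, hθ₂X1]
    simp only [map_neg]
    linear_combination (u ^ mmax : MvPolynomial (Fin 2) K) * hC
  have hθ₂v : θ₂ v = h := by
    rw [hθv θ₂, hθ₂X0, hθ₂X1]
    simp only [map_neg]
    linear_combination (h : MvPolynomial (Fin 2) K) * hC
  refine ⟨θ₁, θ₂, ?_, ?_, ?_, ?_, ?_⟩
  · -- θ₁ tangency
    intro i
    rw [happly θ₁ i, hθ₁u, hθ₁v]
    rcases eq_or_ne i i0 with rfl | hi
    · rw [hQ0]; simp
    · have : α i ^ m i ∣ W := hdvdW i (Finset.mem_erase.mpr ⟨hi, Finset.mem_univ i⟩)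
      exact dvd_add (by simp) (this.mul_left _)
  · -- θ₂ tangency
    intro i
    rw [happly θ₂ i, hθ₂u, hθ₂v]
    rcases eq_or_ne i i0 with rfl | hi
    · rw [hQ0, hP01]
      simpa [hm0, hudef] using dvd_refl (u ^ mmax)
    · have := hz i (Finset.mem_erase.mpr ⟨hi, Finset.mem_univ i⟩)
      have heq : C (P i) * (u ^ mmax) + C (Q i) * h = C (Q i) * h + C (P i) * u ^ mmax := by ring
      rw [heq]
      exact this
  · -- θ₁ degrees
    intro j
    have hWhom : W.IsHomogeneous ((∑ i, m i) - mmax) := by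
      have : W.IsHomogeneous (∑ i ∈ T, 1 * m i) := by
        rw [hW]
        exact IsHomogeneous.prod T _ _ (fun i _ => (hlin i).pow (m i))
      refine wy_homog_congr this (by simp; omega)
    fin_cases j
    · show (θ₁ (X 0)).IsHomogeneous ((∑ i, m i) - mmax)
      rw [hθ₁X0]; exact hWhom.C_mul (-b)
    · show (θ₁ (X 1)).IsHomogeneous ((∑ i, m i) - mmax)
      rw [hθ₁X1]; exact hWhom.C_mul a
  · -- θ₂ degrees
    intro j
    have hupow : (u ^ mmax).IsHomogeneous mmax := by
      refine wy_homog_congr (hu_hom.pow mmax) (by omega)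
    fin_cases j
    · show (θ₂ (X 0)).IsHomogeneous mmax
      rw [hθ₂X0]; exact (hupow.C_mul d).add (hh_hom.C_mul (-b))
    · show (θ₂ (X 1)).IsHomogeneous mmax
      rw [hθ₂X1]; exact (hupow.C_mul (-c)).add (hh_hom.C_mul a)
  · -- basis property
    intro θ hθ
    have hθα0 : u ^ mmax ∣ θ u := by
      have := hθ i0
      rwa [hm0, ← hudef] at this
    obtain ⟨g, hg⟩ := hθα0
    have hdvdfv : W ∣ θ v - g * h := by
      rw [hW]
      refine wy_prod_pow_dvd T α m _ (fun i _ => hprime i)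
        (fun i _ j _ hij => hnd i j hij) ?_
      intro i hi
      have hQi := hQne i (Finset.ne_of_mem_erase hi)
      have hzi := hz i hi
      have hkey : C (Q i) * (θ v - g * h)
          = θ (α i) - g * (C (Q i) * h + C (P i) * u ^ mmax) := by
        rw [happly θ i, hg]
        ring
      have hdvd2 : α i ^ m i ∣ C (Q i) * (θ v - g * h) := by
        rw [hkey]
        exact dvd_sub (hθ i) (hzi.mul_left g)
      have hrw : θ v - g * h = C (Q i)⁻¹ * (C (Q i) * (θ v - g * h)) := by
        rw [← mul_assoc, ← C_mul, inv_mul_cancel₀ hQi, C_1, one_mul]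
      rw [hrw]
      exact hdvd2.mul_left _
    obtain ⟨f, hf⟩ := hdvdfv
    have hθveq : θ v = W * f + g * h := by linear_combination hf
    refine ⟨(f, g), ?_, ?_⟩
    · -- existence
      apply MvPolynomial.derivation_ext
      intro j
      have hsum : ∀ z, (f • θ₁ + g • θ₂) z = f * θ₁ z + g * θ₂ z := by
        intro z
        simp [Derivation.add_apply, Derivation.smul_apply, smul_eq_mul]
      fin_cases j
      · show θ (X 0) = (f • θ₁ + g • θ₂) (X 0)
        have hX0 : (X 0 : MvPolynomial (Fin 2) K) = C d * u + C (-b) * v := by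
          rw [hu, hvdef]
          simp only [map_neg]
          linear_combination (-(X 0) : MvPolynomial (Fin 2) K) * hC
        rw [hsum (X 0), hθ₁X0, hθ₂X0]
        conv_lhs => rw [hX0]
        rw [wy_der_lin θ d (-b) u v, hg, hθveq]
        simp only [map_neg]
        ring
      · show θ (X 1) = (f • θ₁ + g • θ₂) (X 1)
        have hX1 : (X 1 : MvPolynomial (Fin 2) K) = C (-c) * u + C a * v := by
          rw [hu, hvdef]
          simp only [map_neg]
          linear_combination (-(X 1) : MvPolynomial (Fin 2) K) * hC
        rw [hsum (X 1), hθ₁X1, hθ₂X1]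
        conv_lhs => rw [hX1]
        rw [wy_der_lin θ (-c) a u v, hg, hθveq]
        simp only [map_neg]
        ring
    · -- uniqueness
      rintro ⟨f', g'⟩ hfg'
      have hsum : ∀ z, (f' • θ₁ + g' • θ₂) z = f' * θ₁ z + g' * θ₂ z := by
        intro z
        simp [Derivation.add_apply, Derivation.smul_apply, smul_eq_mul]
      have hueq : θ u = f' * θ₁ u + g' * θ₂ u := by
        rw [hfg']; exact hsum u
      have hveq2 : θ v = f' * θ₁ v + g' * θ₂ v := by
        rw [hfg']; exact hsum v
      rw [hθ₁u, hθ₂u] at hueq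
      rw [hθ₁v, hθ₂v] at hveq2
      have hgg : g' = g := by
        have h1 : u ^ mmax * g' = u ^ mmax * g := by
          rw [← hg]
          rw [hueq]; ring
        exact mul_left_cancel₀ (pow_ne_zero _ (hα i0)) h1
      have hff : f' = f := by
        have h1 : W * f' = W * f := by
          rw [hgg] at hveq2
          rw [hθveq] at hveq2
          linear_combination -hveq2
        exact mul_left_cancel₀ hWne h1
      rw [Prod.mk.injEq]
      exact ⟨hff, hgg⟩
end
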